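/- Let r > 1 and set p_r := 2r / log₂(2 + 2^r). Then for all real x ≥ 0, one has (1 + (2x)^r + x^{2r})^{1/r} ≤ (1 + x^{p_r})^{2/p_r}. -/

import Mathlib

open Real

private lemma amgm_aux {s y : ℝ} (hs : 2 ≤ s) (hy : 1 ≤ y) :
    (s - 1) * y ^ (s - 2) ≤ (s - 2) * y ^ (s - 1) + 1 := by
  have hy0 : (0:ℝ) ≤ y := by linarith
  have hs1 : (0:ℝ) < s - 1 := by linarith
  have h := Real.geom_mean_le_arith_mean2_weighted
    (w₁ := (s - 2) / (s - 1)) (w₂ := 1 / (s - 1)) (p₁ := y ^ (s - 1)) (p₂ := 1)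
    (div_nonneg (by linarith) (by linarith)) (div_nonneg (by norm_num) (by linarith))
    (Real.rpow_nonneg hy0 _) zero_le_one
    (by field_simp; ring)
  rw [Real.one_rpow, mul_one, ← Real.rpow_mul hy0] at h
  have he : (s - 1) * ((s - 2) / (s - 1)) = s - 2 := by field_simp
  rw [he] at h
  have h2 := mul_le_mul_of_nonneg_left h hs1.le
  have hne : s - 1 ≠ 0 := hs1.ne'
  calc (s - 1) * y ^ (s - 2)
      ≤ (s - 1) * ((s - 2) / (s - 1) * y ^ (s - 1) + 1 / (s - 1) * 1) := h2
    _ = (s - 2) * y ^ (s - 1) + 1 := by field_simp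

private lemma key2 {s y : ℝ} (hs : 2 ≤ s) (hy : 1 ≤ y) :
    y ^ s - 1 ≤ (y - 1) * (y + 1) ^ (s - 1) := by
  have hy0 : (0:ℝ) < y := by linarith
  have hbern : 1 + (s - 1) * (1 / y) ≤ (1 + 1 / y) ^ (s - 1) :=
    one_add_mul_self_le_rpow_one_add
      (le_trans (by norm_num : (-1:ℝ) ≤ 0) (by positivity)) (by linarith)
  have hsplit : (y + 1) ^ (s - 1) = y ^ (s - 1) * (1 + 1 / y) ^ (s - 1) := by
    rw [← Real.mul_rpow hy0.le (by positivity)]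
    congr 1
    field_simp
  have e1 : y ^ (s - 1) = y ^ (s - 2) * y := by
    rw [show s - 1 = s - 2 + 1 by ring, Real.rpow_add_one hy0.ne']
  have e2 : y ^ s = y ^ (s - 1) * y := by
    rw [show s = s - 1 + 1 by ring, Real.rpow_add_one hy0.ne']
    rw [show s - 1 + 1 - 1 = s - 1 by ring]
  have hA : (0:ℝ) ≤ y ^ (s - 1) := Real.rpow_nonneg hy0.le _
  have hb : y ^ (s - 1) + (s - 1) * y ^ (s - 2) ≤ (y + 1) ^ (s - 1) := by
    rw [hsplit]
    have h3 := mul_le_mul_of_nonneg_left hbern hA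
    have hinv : y ^ (s - 1) * (1 / y) = y ^ (s - 2) := by
      rw [e1]; field_simp
    nlinarith [h3, hinv]
  have hamgm := amgm_aux hs hy
  nlinarith [mul_le_mul_of_nonneg_left hb (by linarith : (0:ℝ) ≤ y - 1), e1, e2]

private lemma F_lower {s : ℝ} (hs : 2 ≤ s) (θ : ℝ) :
    2 ^ s - 2 ≤ (exp θ + exp (-θ)) ^ s - exp (s * θ) - exp (-(s * θ)) := by
  set F : ℝ → ℝ := fun u => (exp u + exp (-u)) ^ s - exp (s * u) - exp (-(s * u)) with hFdef
  have hC : ∀ u : ℝ, (0:ℝ) < exp u + exp (-u) := fun u => by positivity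
  have hF : ∀ u : ℝ, HasDerivAt F
      ((exp u - exp (-u)) * s * (exp u + exp (-u)) ^ (s - 1)
        - s * exp (s * u) + s * exp (-(s * u))) u := by
    intro u
    have h1 : HasDerivAt (fun v : ℝ => exp v + exp (-v)) (exp u + exp (-u) * (-1)) u :=
      (Real.hasDerivAt_exp u).add (((hasDerivAt_id u).neg).exp)
    have h1' := h1.rpow_const (p := s) (Or.inl (hC u).ne')
    have h2 : HasDerivAt (fun v : ℝ => exp (s * v)) (exp (s * u) * s) u := by
      have := ((hasDerivAt_id u).const_mul s).exp
      simpa using this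
    have h3 : HasDerivAt (fun v : ℝ => exp (-(s * v))) (exp (-(s * u)) * (-s)) u := by
      have := (((hasDerivAt_id u).const_mul s).neg).exp
      simpa using this
    have h4 := (h1'.sub h2).sub h3
    refine h4.congr_deriv ?_
    ring
  have hcont : Continuous F := (Differentiable.continuous fun u => (hF u).differentiableAt)
  have hmono : MonotoneOn F (Set.Ici (0:ℝ)) := by
    apply monotoneOn_of_deriv_nonneg (convex_Ici 0) hcont.continuousOn
    · intro u _
      exact ((hF u).differentiableAt).differentiableWithinAt
    · intro u hu
      rw [interior_Ici] at hu
      rw [(hF u).deriv]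
      have hu0 : (0:ℝ) < u := hu
      have hy : (1:ℝ) ≤ exp (2 * u) := one_le_exp (by linarith)
      have hk := key2 hs hy
      have hys : exp (2 * u) ^ s = exp (s * u) * exp (s * u) := by
        rw [← Real.exp_mul, ← Real.exp_add]; ring_nf
      have hy1 : exp (2 * u) + 1 = exp u * (exp u + exp (-u)) := by
        rw [mul_add, ← Real.exp_add, ← Real.exp_add, show u + u = 2 * u by ring,
          show u + -u = 0 by ring, Real.exp_zero]
      have hy2 : exp (2 * u) - 1 = exp u * (exp u - exp (-u)) := by
        rw [mul_sub, ← Real.exp_add, ← Real.exp_add, show u + u = 2 * u by ring,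
          show u + -u = 0 by ring, Real.exp_zero]
      have hy3 : (exp (2 * u) + 1) ^ (s - 1)
          = exp ((s - 1) * u) * (exp u + exp (-u)) ^ (s - 1) := by
        rw [hy1, Real.mul_rpow (exp_pos u).le (hC u).le, ← Real.exp_mul]
        ring_nf
      rw [hys, hy2, hy3] at hk
      have hes : exp u * exp ((s - 1) * u) = exp (s * u) := by
        rw [← Real.exp_add]; ring_nf
      have hinv : exp (s * u) * exp (-(s * u)) = 1 := by
        rw [← Real.exp_add]; simp
      have hEp : (0:ℝ) < exp (s * u) := exp_pos _
      have hkey : exp (s * u) - exp (-(s * u))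
          ≤ (exp u - exp (-u)) * (exp u + exp (-u)) ^ (s - 1) := by
        rw [← mul_le_mul_iff_of_pos_right hEp]
        calc (exp (s * u) - exp (-(s * u))) * exp (s * u)
            = exp (s * u) * exp (s * u) - 1 := by nlinarith [hinv]
          _ ≤ exp u * (exp u - exp (-u)) * (exp ((s - 1) * u) * (exp u + exp (-u)) ^ (s - 1)) := hk
          _ = (exp u - exp (-u)) * (exp u + exp (-u)) ^ (s - 1) * exp (s * u) := by
              rw [← hes]; ring
      have hs0 : (0:ℝ) ≤ s := by linarith
      nlinarith [mul_le_mul_of_nonneg_left hkey hs0]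
  have hF0 : F 0 = 2 ^ s - 2 := by
    simp only [hFdef, neg_zero, mul_zero, Real.exp_zero]
    norm_num
    ring
  have goal : 2 ^ s - 2 ≤ F θ := by
    rcases le_or_gt 0 θ with hθ | hθ
    · have h := hmono Set.self_mem_Ici (Set.mem_Ici.mpr hθ) hθ
      rw [hF0] at h
      exact h
    · have hθ' : (0:ℝ) ≤ -θ := by linarith
      have h := hmono Set.self_mem_Ici (Set.mem_Ici.mpr hθ') hθ'
      rw [hF0] at h
      have heven : F (-θ) = F θ := by
        simp only [hFdef]
        rw [neg_neg, add_comm (exp (-θ)) (exp θ), show s * -θ = -(s * θ) by ring, neg_neg]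
        ring
      rw [heven] at h
      exact h
  simpa only [hFdef] using goal

private lemma coreG {s t : ℝ} (hs : 2 ≤ s) (ht : 0 < t) :
    1 + (2 ^ s - 2) * t ^ (s / 2) + t ^ s ≤ (1 + t) ^ s := by
  set θ : ℝ := Real.log t / 2 with hθdef
  have h1 : exp θ = t ^ (1/2 : ℝ) := by
    rw [rpow_def_of_pos ht]; congr 1; rw [hθdef]; ring
  have h2 : exp (-θ) = t ^ (-(1/2) : ℝ) := by
    rw [rpow_def_of_pos ht]; congr 1; rw [hθdef]; ring
  have h3 : exp (s * θ) = t ^ (s / 2) := by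
    rw [rpow_def_of_pos ht]; congr 1; rw [hθdef]; ring
  have h4 : exp (-(s * θ)) = t ^ (-(s / 2)) := by
    rw [rpow_def_of_pos ht]; congr 1; rw [hθdef]; ring
  have hhalf : t * t ^ (-(1/2) : ℝ) = t ^ (1/2 : ℝ) := by
    nth_rewrite 1 [← Real.rpow_one t]
    rw [← Real.rpow_add ht]
    norm_num
  have hbase : exp θ + exp (-θ) = (1 + t) * t ^ (-(1/2) : ℝ) := by
    rw [h1, h2, add_mul, one_mul, hhalf, add_comm]
  have hCs : (exp θ + exp (-θ)) ^ s = (1 + t) ^ s * t ^ (-(s / 2)) := by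
    rw [hbase, Real.mul_rpow (by linarith) (Real.rpow_nonneg ht.le _), ← Real.rpow_mul ht.le]
    congr 2
    ring
  have hF := F_lower hs θ
  rw [hCs, h3, h4] at hF
  have e3 : t ^ (-(s / 2)) * t ^ (s / 2) = 1 := by
    rw [← Real.rpow_add ht]; simp
  have e4 : t ^ (s / 2) * t ^ (s / 2) = t ^ s := by
    rw [← Real.rpow_add ht]
    congr 1
    ring
  have hP : (0:ℝ) < t ^ (s / 2) := Real.rpow_pos_of_pos ht _
  have hmul := mul_le_mul_of_nonneg_right hF hP.le
  have expand : ((1 + t) ^ s * t ^ (-(s / 2)) - t ^ (s / 2) - t ^ (-(s / 2))) * t ^ (s / 2)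
      = (1 + t) ^ s - t ^ s - 1 := by
    linear_combination ((1 + t) ^ s - 1) * e3 - e4
  rw [expand] at hmul
  nlinarith [hmul]

theorem numerical_diagonal_inequality (r : ℝ) (hr : 1 < r) (x : ℝ) (hx : 0 ≤ x) :
    (1 + (2 * x) ^ r + x ^ (2 * r)) ^ (1 / r) ≤
      (1 + x ^ (2 * r / Real.logb 2 (2 + 2 ^ r))) ^
        (2 / (2 * r / Real.logb 2 (2 + 2 ^ r))) := by
  have hr0 : (0:ℝ) < r := by linarith
  set s : ℝ := Real.logb 2 (2 + 2 ^ r) with hsdef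
  have h2r : (2:ℝ) < 2 ^ r := by
    calc (2:ℝ) = 2 ^ (1:ℝ) := by rw [Real.rpow_one]
      _ < 2 ^ r := Real.rpow_lt_rpow_of_exponent_lt one_lt_two hr
  have hApos : (0:ℝ) < 2 + 2 ^ r := by linarith
  have hs2 : 2 < s := by
    rw [hsdef, Real.lt_logb_iff_rpow_lt one_lt_two hApos]
    rw [show (2:ℝ) ^ (2:ℝ) = 4 by norm_num]
    linarith
  have hs0 : (0:ℝ) < s := by linarith
  have hpow : (2:ℝ) ^ s = 2 + 2 ^ r :=
    Real.rpow_logb (by norm_num) (by norm_num) hApos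
  set p : ℝ := 2 * r / s with hpdef
  have hp0 : (0:ℝ) < p := by positivity
  rcases eq_or_lt_of_le hx with hx0 | hx0
  · rw [← hx0]
    rw [mul_zero, Real.zero_rpow hr0.ne', Real.zero_rpow (by positivity : (0:ℝ) < 2 * r).ne',
      Real.zero_rpow hp0.ne']
    norm_num
  · set t : ℝ := x ^ p with htdef
    have ht : 0 < t := Real.rpow_pos_of_pos hx0 _
    have hxr : x ^ r = t ^ (s / 2) := by
      rw [htdef, ← Real.rpow_mul hx0.le]
      congr 1
      rw [hpdef, div_mul_div_comm, eq_div_iff (by positivity : (0:ℝ) < s * 2).ne']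
      ring
    have hx2r : x ^ (2 * r) = t ^ s := by
      rw [htdef, ← Real.rpow_mul hx0.le]
      congr 1
      rw [hpdef, div_mul_eq_mul_div, eq_div_iff hs0.ne']
    have h2x : (2 * x) ^ r = 2 ^ r * x ^ r := Real.mul_rpow (by norm_num) hx0.le
    have hcore := coreG hs2.le ht
    have hL : 1 + (2 * x) ^ r + x ^ (2 * r) ≤ (1 + t) ^ s := by
      rw [h2x, hxr, hx2r]
      have h2rs : (2:ℝ) ^ r = 2 ^ s - 2 := by linarith
      rw [h2rs]
      linarith [hcore]
    have hLnn : (0:ℝ) ≤ 1 + (2 * x) ^ r + x ^ (2 * r) := by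
      have hc1 := Real.rpow_nonneg (by linarith : (0:ℝ) ≤ 2 * x) r
      have hc2 := Real.rpow_nonneg hx (2 * r)
      linarith
    have hmono := Real.rpow_le_rpow hLnn hL (by positivity : (0:ℝ) ≤ 1 / r)
    calc (1 + (2 * x) ^ r + x ^ (2 * r)) ^ (1 / r)
        ≤ ((1 + t) ^ s) ^ (1 / r) := hmono
      _ = (1 + t) ^ (2 / p) := by
          rw [← Real.rpow_mul (by linarith : (0:ℝ) ≤ 1 + t)]
          congr 1
          rw [hpdef, div_div_eq_mul_div, eq_div_iff (by positivity : (0:ℝ) < 2 * r).ne',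
            one_div]
          field_simp
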